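/- Let G' be the transformed graph of G (vertices V_{G'} = V_G ∪ E_G, with edges from v to (v,t) for each edge (v,t) ∈ E_G, and from (u,v) to (v,t) whenever (u,v),(v,t) ∈ E_G and u ≠ t). Then there is a bijection between the set of no-tottering walks of length n in G and the set of walks of length n in G' starting at a vertex of V_G, and this bijection preserves labels. -/

import Mathlib

open scoped Classical

/-- A finite labeled directed graph: vertices `V`, edge relation `E`, vertex
labels `lv` and edge labels `le`, all labels taken in the alphabet `A`. -/
structure LGraph (A : Type) where
  V : Type
  [fintypeV : Fintype V]
  [decEqV : DecidableEq V]
  E : V → V → Prop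
  [decE : DecidableRel E]
  lv : V → A
  le : V → V → A

attribute [instance] LGraph.fintypeV LGraph.decEqV LGraph.decE

/-- A labeled rooted tree: a root label together with the list of children,
each child carrying the label of the edge connecting it to its parent and
the corresponding labeled subtree. -/
inductive LTree (A : Type) : Type where
  | node : A → List (A × LTree A) → LTree A

namespace LTree

variable {A : Type}

-- `size t` : number of nodes
mutual
def size : LTree A → ℕ
  | .node _ cs => 1 + sizeList cs
def sizeList : List (A × LTree A) → ℕ
  | [] => 0
  | (_, t) :: rest => size t + sizeList rest
end

-- `depth t` : maximal number of edges from the root to a node, plus one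
mutual
def depth : LTree A → ℕ
  | .node _ cs => 1 + depthList cs
def depthList : List (A × LTree A) → ℕ
  | [] => 0
  | (_, t) :: rest => max (depth t) (depthList rest)
end

-- `leaves t` : number of leaf nodes
mutual
def leaves : LTree A → ℕ
  | .node _ [] => 1
  | .node _ (c :: cs) => leavesList (c :: cs)
def leavesList : List (A × LTree A) → ℕ
  | [] => 0
  | (_, t) :: rest => leaves t + leavesList rest
end

/-- branching cardinality: number of leaves minus one -/
def branch (t : LTree A) : ℕ := t.leaves - 1

-- `balanced t h` : `t` is perfectly depth-balanced of order `h` (every leaf at depth `h`)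
mutual
def balanced : LTree A → ℕ → Prop
  | .node _ [], h => h = 1
  | .node _ (c :: cs), h => balancedList (c :: cs) (h - 1) ∧ 2 ≤ h
def balancedList : List (A × LTree A) → ℕ → Prop
  | [], _ => True
  | (_, t) :: rest, h => balanced t h ∧ balancedList rest h
end

end LTree

/-- A tree of graph vertices: the candidate images of the nodes of a tree
under a tree-pattern. -/
inductive VTree (V : Type) : Type where
  | node : V → List (VTree V) → VTree V

namespace VTree

variable {V : Type}

/-- the vertex at the root -/
def root : VTree V → V
  | .node u _ => u

/-- the list of subtrees at the root -/
def children : VTree V → List (VTree V)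
  | .node _ ps => ps

end VTree

/-- `isPattern G t p` : the decoration `p` of the tree `t` by vertices of `G` is a
tree-pattern of `G` with respect to `t`: node labels match, every tree edge is
realized by an edge of `G` with matching label, and sibling nodes are mapped to
distinct vertices. -/
def isPattern {A : Type} (G : LGraph A) : LTree A → VTree G.V → Prop
  | .node a cs, .node u ps =>
    G.lv u = a ∧ ps.length = cs.length ∧
    (∀ i j : Fin ps.length, i ≠ j → (ps.get i).root ≠ (ps.get j).root) ∧
    ∀ i : Fin ps.length, ∀ (h : (i : ℕ) < cs.length),
      G.E u (ps.get i).root ∧ G.le u (ps.get i).root = (cs.get ⟨i, h⟩).1 ∧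
      isPattern G (cs.get ⟨i, h⟩).2 (ps.get i)
termination_by _ p => sizeOf p
decreasing_by
  have h1 : sizeOf (ps.get i) < sizeOf ps := List.sizeOf_lt_of_mem (ps.get_mem i)
  simp only [VTree.node.sizeOf_spec]
  omega

/-- `psiRoot G t u` : number of tree-patterns of `G` with respect to `t` rooted at `u`. -/
noncomputable def psiRoot {A : Type} (G : LGraph A) (t : LTree A) (u : G.V) : ℕ :=
  Set.ncard {p : VTree G.V | isPattern G t p ∧ p.root = u}

/-- `psi G t` : number of tree-patterns of `G` with respect to `t`. -/
noncomputable def psi {A : Type} (G : LGraph A) (t : LTree A) : ℕ :=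
  Set.ncard {p : VTree G.V | isPattern G t p}

/-- `isWalk G w` : `w` is a walk of length `n` in `G` (consecutive vertices joined by edges). -/
def isWalk {A : Type} (G : LGraph A) {n : ℕ} (w : Fin (n + 1) → G.V) : Prop :=
  ∀ i j : Fin (n + 1), (j : ℕ) = (i : ℕ) + 1 → G.E (w i) (w j)

/-- `noTotWalk G w` : the walk `w` is no-tottering: `v_i ≠ v_{i+2}` for all `i`. -/
def noTotWalk {A : Type} (G : LGraph A) {n : ℕ} (w : Fin (n + 1) → G.V) : Prop :=
  ∀ i j : Fin (n + 1), (j : ℕ) = (i : ℕ) + 2 → w i ≠ w j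

/-- `sameLabels G1 G2 w1 w2` : the two walks are identically labeled (corresponding
vertices and edges carry the same labels). -/
def sameLabels {A : Type} (G1 G2 : LGraph A) {n : ℕ}
    (w1 : Fin (n + 1) → G1.V) (w2 : Fin (n + 1) → G2.V) : Prop :=
  (∀ i, G1.lv (w1 i) = G2.lv (w2 i)) ∧
    (∀ i j : Fin (n + 1), (j : ℕ) = (i : ℕ) + 1 → G1.le (w1 i) (w1 j) = G2.le (w2 i) (w2 j))

/-- Walk-count kernel `K^n_Walk`: number of pairs of identically labeled walks of
length `n` in `G1` and `G2`. -/
noncomputable def walkKernel {A : Type} (G1 G2 : LGraph A) (n : ℕ) : ℝ :=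
  ∑ w1 : Fin (n + 1) → G1.V, ∑ w2 : Fin (n + 1) → G2.V,
    if isWalk G1 w1 ∧ isWalk G2 w2 ∧ sameLabels G1 G2 w1 w2 then 1 else 0

/-- The transformed graph `G'` of `G`: its vertices are the vertices and the edges
of `G`; there is an edge from `v` to `(v,t)` for every edge `(v,t)` of `G`, and an
edge from `(u,v)` to `(v,t)` for every pair of consecutive edges of `G` with `u ≠ t`.
A vertex `(u,v)` is labeled by `l(v)` and any edge pointing to `(v,t)` by `l((v,t))`. -/
noncomputable def transform {A : Type} (G : LGraph A) : LGraph A where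
  V := G.V ⊕ {p : G.V × G.V // G.E p.1 p.2}
  fintypeV :=
    have : Finite {p : G.V × G.V // G.E p.1 p.2} := Subtype.finite
    have : Fintype {p : G.V × G.V // G.E p.1 p.2} := Fintype.ofFinite _
    inferInstance
  decEqV := Classical.decEq _
  E := fun x y =>
    match x, y with
    | Sum.inl v, Sum.inr e => e.1.1 = v
    | Sum.inr e, Sum.inr e' => e'.1.1 = e.1.2 ∧ e.1.1 ≠ e'.1.2
    | _, _ => False
  decE := Classical.decRel _
  lv := fun x =>
    match x with
    | Sum.inl v => G.lv v
    | Sum.inr e => G.lv e.1.2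
  le := fun _ y =>
    match y with
    | Sum.inl v => G.lv v
    | Sum.inr e => G.le e.1.1 e.1.2

section Aux

variable {A : Type} (G : LGraph A) {n : ℕ}

/-- Forward map: a no-tottering walk in `G` to a walk in `transform G`. -/
noncomputable def fwdWalk (w : Fin (n + 1) → G.V) (hw : isWalk G w)
    (i : Fin (n + 1)) : (transform G).V :=
  if h : (i : ℕ) = 0 then Sum.inl (w i)
  else Sum.inr ⟨(w ⟨(i : ℕ) - 1, by omega⟩, w i), hw _ _ (by simp; omega)⟩

/-- Backward map on vertices. -/
def bckWalk (w' : Fin (n + 1) → (transform G).V) (i : Fin (n + 1)) : G.V :=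
  match w' i with
  | .inl v => v
  | .inr e => e.1.2

lemma bck_spec (w' : Fin (n + 1) → (transform G).V)
    (hw : isWalk (transform G) w') (i : Fin (n + 1)) (hi : 0 < (i : ℕ)) :
    ∃ e : {p : G.V × G.V // G.E p.1 p.2}, w' i = Sum.inr e ∧
      e.1.1 = bckWalk G w' ⟨(i : ℕ) - 1, by omega⟩ ∧ e.1.2 = bckWalk G w' i := by
  have he := hw ⟨(i : ℕ) - 1, by omega⟩ i (by simp; omega)
  rcases h2 : w' i with v | e
  · rcases h1 : w' ⟨(i : ℕ) - 1, by omega⟩ with v' | e' <;>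
      rw [h1, h2] at he <;> simp [transform] at he
  · refine ⟨e, rfl, ?_, ?_⟩
    · rcases h1 : w' ⟨(i : ℕ) - 1, by omega⟩ with v' | e' <;>
        rw [h1, h2] at he <;> simp [transform] at he <;>
        simp [bckWalk, h1] <;> tauto
    · simp [bckWalk, h2]

lemma fin_mk_eq {m a : ℕ} {h : a < m} {i : Fin m} (hai : a = (i : ℕ)) :
    (⟨a, h⟩ : Fin m) = i := Fin.ext hai

/-- Refined version of `bck_spec` with a chosen predecessor index. -/
lemma bck_spec' (w' : Fin (n + 1) → (transform G).V)
    (hw : isWalk (transform G) w') (i i' : Fin (n + 1)) (h : (i : ℕ) = (i' : ℕ) + 1) :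
    ∃ e : {p : G.V × G.V // G.E p.1 p.2}, w' i = Sum.inr e ∧
      e.1.1 = bckWalk G w' i' ∧ e.1.2 = bckWalk G w' i := by
  obtain ⟨e, he, h1, h2⟩ := bck_spec G w' hw i (by omega)
  exact ⟨e, he, h1.trans (congrArg (bckWalk G w') (fin_mk_eq (by omega))), h2⟩

lemma fwd_isWalk (w : Fin (n + 1) → G.V) (hw : isWalk G w) (hnt : noTotWalk G w) :
    isWalk (transform G) (fwdWalk G w hw) := by
  intro i j hj
  have hj0 : (j : ℕ) ≠ 0 := by omega
  unfold fwdWalk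
  rcases Nat.eq_zero_or_pos (i : ℕ) with hi | hi
  · erw [dif_pos hi, dif_neg hj0]
    show w ⟨(j : ℕ) - 1, by omega⟩ = w i
    exact congrArg w (fin_mk_eq (by omega))
  · erw [dif_neg (show (i : ℕ) ≠ 0 by omega), dif_neg hj0]
    show w ⟨(j : ℕ) - 1, by omega⟩ = w i ∧ w ⟨(i : ℕ) - 1, by omega⟩ ≠ w j
    exact ⟨congrArg w (fin_mk_eq (by omega)),
      hnt ⟨(i : ℕ) - 1, by omega⟩ j (show (j : ℕ) = (i : ℕ) - 1 + 2 by omega)⟩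

lemma bck_isWalk (w' : Fin (n + 1) → (transform G).V)
    (hw : isWalk (transform G) w') : isWalk G (bckWalk G w') := by
  intro i j hj
  obtain ⟨e, he, h1, h2⟩ := bck_spec' G w' hw j i hj
  rw [← h1, ← h2]
  exact e.2

lemma bck_noTot (w' : Fin (n + 1) → (transform G).V)
    (hw : isWalk (transform G) w') : noTotWalk G (bckWalk G w') := by
  intro i j hj
  obtain ⟨k, hk⟩ : ∃ k : Fin (n + 1), (k : ℕ) = (i : ℕ) + 1 :=
    ⟨⟨(i : ℕ) + 1, by omega⟩, rfl⟩
  obtain ⟨e1, he1, h11, h12⟩ := bck_spec' G w' hw k i (by omega)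
  obtain ⟨e2, he2, h21, h22⟩ := bck_spec' G w' hw j k (by omega)
  have he := hw k j (by omega)
  rw [he1, he2] at he
  simp [transform] at he
  rw [← h11, ← h22]
  exact he.2

lemma bck_fwd (w : Fin (n + 1) → G.V) (hw : isWalk G w) :
    bckWalk G (fwdWalk G w hw) = w := by
  funext i
  by_cases h : (i : ℕ) = 0
  · simp only [bckWalk, fwdWalk]; erw [dif_pos h]
  · simp only [bckWalk, fwdWalk]; erw [dif_neg h]

lemma fwd_bck (w' : Fin (n + 1) → (transform G).V)
    (hw : isWalk (transform G) w') (h0 : ∃ v : G.V, w' 0 = Sum.inl v) :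
    fwdWalk G (bckWalk G w') (bck_isWalk G w' hw) = w' := by
  funext i
  unfold fwdWalk
  rcases Nat.eq_zero_or_pos (i : ℕ) with hi | hi
  · erw [dif_pos hi]
    have hi0 : i = 0 := Fin.ext (by simp [hi])
    subst hi0
    obtain ⟨v, hv⟩ := h0
    rw [hv]
    simp [bckWalk, hv]; rfl
  · erw [dif_neg (show (i : ℕ) ≠ 0 by omega)]
    obtain ⟨e, he, h1, h2⟩ := bck_spec' G w' hw i ⟨(i : ℕ) - 1, by omega⟩
      (show (i : ℕ) = (i : ℕ) - 1 + 1 by omega)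
    rw [he]
    exact congrArg Sum.inr (Subtype.ext (Prod.ext h1.symm h2.symm))

lemma fwd_lv (w : Fin (n + 1) → G.V) (hw : isWalk G w) (i : Fin (n + 1)) :
    (transform G).lv (fwdWalk G w hw i) = G.lv (w i) := by
  unfold fwdWalk
  by_cases h : (i : ℕ) = 0
  · erw [dif_pos h]; rfl
  · erw [dif_neg h]; rfl

lemma fwd_le (w : Fin (n + 1) → G.V) (hw : isWalk G w) {i j : Fin (n + 1)}
    (hj : (j : ℕ) = (i : ℕ) + 1) :
    (transform G).le (fwdWalk G w hw i) (fwdWalk G w hw j) = G.le (w i) (w j) := by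
  have hj0 : (j : ℕ) ≠ 0 := by omega
  unfold fwdWalk
  erw [dif_neg hj0]
  show G.le (w ⟨(j : ℕ) - 1, by omega⟩) (w j) = G.le (w i) (w j)
  exact congrArg (fun v => G.le v (w j)) (congrArg w (fin_mk_eq (by omega)))

end Aux

/-- There is a bijection between the no-tottering walks of length `n` of `G` and the
walks of length `n` of the transformed graph `G'` starting at a vertex of (the copy
of) `V_G`, and this bijection preserves the vertex and edge labels of the walks. -/
theorem stmt_15 {A : Type} (G : LGraph A) (n : ℕ) :
    ∃ e : {w : Fin (n + 1) → G.V // isWalk G w ∧ noTotWalk G w} ≃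
          {w : Fin (n + 1) → (transform G).V //
            isWalk (transform G) w ∧ ∃ v : G.V, w 0 = Sum.inl v},
      ∀ w : {w : Fin (n + 1) → G.V // isWalk G w ∧ noTotWalk G w},
        (∀ i, (transform G).lv ((e w).1 i) = G.lv (w.1 i)) ∧
        (∀ i j : Fin (n + 1), (j : ℕ) = (i : ℕ) + 1 →
          (transform G).le ((e w).1 i) ((e w).1 j) = G.le (w.1 i) (w.1 j)) := by
  refine ⟨⟨fun w => ⟨fwdWalk G w.1 w.2.1, fwd_isWalk G w.1 w.2.1 w.2.2,
      ⟨w.1 0, by unfold fwdWalk; erw [dif_pos (show ((0 : Fin (n + 1)) : ℕ) = 0 by simp)]⟩⟩,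
    fun w' => ⟨bckWalk G w'.1, bck_isWalk G w'.1 w'.2.1, bck_noTot G w'.1 w'.2.1⟩,
    fun w => Subtype.ext (bck_fwd G w.1 w.2.1),
    fun w' => Subtype.ext (fwd_bck G w'.1 w'.2.1 w'.2.2)⟩, ?_⟩
  exact fun w => ⟨fun i => fwd_lv G w.1 w.2.1 i, fun i j hj => fwd_le G w.1 w.2.1 hj⟩
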